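/- Suppose the point of C(S) closest to the origin is nonzero, and suppose there exists a real number λ > 0 such that λ·(e₁ + e₂ + ⋯ + e_{M−1} − (M−1)e_M) ∈ C(S). Then M is the only vertex of G(S) with no outgoing edges; that is, there is no j with (M,j) ∈ S, while for every i ∈ {1,…,M−1} there exists some j with (i,j) ∈ S. -/

import Mathlib

/-- Auxiliary: a directed path in `S` from `a` to `b` yields a nonnegative combination of
edge vectors summing to `e a - e b`. -/
lemma chain_aux {V : Type*} [AddCommGroup V] [Module ℝ V] {n : ℕ}
    (e : Fin (n + 1) → V) (S : Finset (Fin (n + 1) × Fin (n + 1)))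
    {a b : Fin (n + 1)}
    (h : Relation.ReflTransGen (fun i j => (i, j) ∈ S) a b) :
    ∃ c : Fin (n + 1) × Fin (n + 1) → ℝ, (∀ p, 0 ≤ c p) ∧
      ∑ p ∈ S, c p • (e p.1 - e p.2) = e a - e b := by
  induction h with
  | refl => exact ⟨0, fun p => le_rfl, by simp⟩
  | @tail b d hab hbd ih =>
    obtain ⟨c, hc0, hcs⟩ := ih
    refine ⟨fun p => c p + if p = (b, d) then 1 else 0, ?_, ?_⟩
    · intro p
      have : (0:ℝ) ≤ if p = (b, d) then 1 else 0 := by split <;> norm_num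
      exact add_nonneg (hc0 p) this
    · have hind : ∑ p ∈ S, (if p = (b, d) then (1:ℝ) else 0) • (e p.1 - e p.2)
          = e b - e d := by
        rw [Finset.sum_congr rfl (fun p _ => by
          split <;> simp : ∀ p ∈ S, (if p = (b, d) then (1:ℝ) else 0) • (e p.1 - e p.2)
            = if p = (b, d) then e p.1 - e p.2 else 0)]
        rw [Finset.sum_ite_eq' S (b, d) (fun p => e p.1 - e p.2), if_pos hbd]
      calc ∑ p ∈ S, (c p + if p = (b, d) then (1:ℝ) else 0) • (e p.1 - e p.2)
          = (∑ p ∈ S, c p • (e p.1 - e p.2))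
            + ∑ p ∈ S, (if p = (b, d) then (1:ℝ) else 0) • (e p.1 - e p.2) := by
            rw [← Finset.sum_add_distrib]
            exact Finset.sum_congr rfl fun p _ => by rw [add_smul]
        _ = (e a - e b) + (e b - e d) := by rw [hcs, hind]
        _ = e a - e d := by abel

/-- If the point of C(S) closest to the origin is nonzero and the ray
ℝ₊(e₁ + ⋯ + e_{M−1} − (M−1)e_M) meets C(S), then M (here `Fin.last n`) is the only
vertex of G(S) with no outgoing edges. -/
theorem stmt1 {V : Type*} [NormedAddCommGroup V] [InnerProductSpace ℝ V]
    (n : ℕ) (hn : 1 ≤ n) (e : Fin (n + 1) → V)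
    (he : ∀ i, e i ≠ 0)
    (horth : ∀ i j, i ≠ j → inner ℝ (e i) (e j) = (0 : ℝ))
    (S : Finset (Fin (n + 1) × Fin (n + 1))) (hS : S.Nonempty)
    (β : V)
    (hmem : β ∈ convexHull ℝ
      ((fun p : Fin (n + 1) × Fin (n + 1) => e p.1 - e p.2) '' ↑S))
    (hmin : ∀ v ∈ convexHull ℝ
      ((fun p : Fin (n + 1) × Fin (n + 1) => e p.1 - e p.2) '' ↑S), ‖β‖ ≤ ‖v‖)
    (hβ : β ≠ 0)
    (hray : ∃ lam : ℝ, 0 < lam ∧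
      lam • ((∑ i : Fin n, e i.castSucc) - (n : ℝ) • e (Fin.last n)) ∈
        convexHull ℝ ((fun p : Fin (n + 1) × Fin (n + 1) => e p.1 - e p.2) '' ↑S)) :
    (∀ j, (Fin.last n, j) ∉ S) ∧
      (∀ i : Fin (n + 1), i ≠ Fin.last n → ∃ j, (i, j) ∈ S) := by
  classical
  set f : Fin (n + 1) × Fin (n + 1) → V := fun p => e p.1 - e p.2 with hf
  -- 0 is not in the hull
  have h0hull : (0 : V) ∉ convexHull ℝ (f '' ↑S) := by
    intro h0
    have : ‖β‖ ≤ 0 := by simpa using hmin 0 h0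
    exact hβ (norm_eq_zero.mp (le_antisymm this (norm_nonneg β)))
  have Npos : ∀ k, (0:ℝ) < inner ℝ (e k) (e k) := fun k => by
    rw [real_inner_self_eq_norm_sq]
    exact pow_pos (norm_pos_iff.mpr (he k)) 2
  -- coefficient extraction
  have key : ∀ (c : Fin (n + 1) → ℝ) k,
      (inner ℝ (∑ i, c i • e i) (e k) : ℝ) = c k * inner ℝ (e k) (e k) := by
    intro c k
    rw [sum_inner]
    rw [Finset.sum_eq_single k]
    · rw [real_inner_smul_left]
    · intro i _ hik
      rw [real_inner_smul_left, horth i k hik, mul_zero]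
    · intro h; exact absurd (Finset.mem_univ k) h
  have hext : ∀ c d : Fin (n + 1) → ℝ,
      (∑ i, c i • e i) = (∑ i, d i • e i) → ∀ k, c k = d k := by
    intro c d h k
    have h2 := congrArg (fun v => (inner ℝ v (e k) : ℝ)) h
    simp only [key] at h2
    exact mul_right_cancel₀ (ne_of_gt (Npos k)) h2
  -- expansion of edge vectors in coordinates
  have fexpand : ∀ p : Fin (n + 1) × Fin (n + 1),
      f p = ∑ k, ((if p.1 = k then (1:ℝ) else 0) - (if p.2 = k then 1 else 0)) • e k := by
    intro p
    simp only [sub_smul, Finset.sum_sub_distrib, ite_smul, one_smul, zero_smul,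
      Finset.sum_ite_eq, Finset.mem_univ, if_true, hf]
  -- expansion of the ray direction
  have wexpand : (∑ i : Fin n, e i.castSucc) - (n : ℝ) • e (Fin.last n)
      = ∑ k, (if k = Fin.last n then -(n:ℝ) else 1) • e k := by
    rw [Fin.sum_univ_castSucc
      (f := fun k => (if k = Fin.last n then -(n:ℝ) else 1) • e k)]
    have h1 : ∀ i : Fin n, i.castSucc ≠ Fin.last n := fun i => (Fin.castSucc_lt_last i).ne
    simp [h1, sub_eq_add_neg]
  -- get the weights from hray
  obtain ⟨lam, hlam, hmem'⟩ := hray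
  rw [mem_convexHull_iff_exists_fintype] at hmem'
  obtain ⟨ι, _inst, w, z, hw0, hw1, hz, hwz⟩ := hmem'
  have hzchoose : ∀ i : ι, ∃ q, q ∈ S ∧ f q = z i := by
    intro i
    obtain ⟨q, hq1, hq2⟩ := hz i
    exact ⟨q, hq1, hq2⟩
  choose p hpS hpz using hzchoose
  have hsum : ∑ i : ι, w i • f (p i)
      = lam • ((∑ i : Fin n, e i.castSucc) - (n : ℝ) • e (Fin.last n)) := by
    rw [Finset.sum_congr rfl fun i _ => by rw [hpz i]]
    exact hwz
  -- divergence identities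
  set A : (Fin (n + 1) × Fin (n + 1)) → Fin (n + 1) → ℝ :=
    fun q k => (if q.1 = k then (1:ℝ) else 0) - (if q.2 = k then 1 else 0) with hA
  have hdiv : ∀ k, (∑ i : ι, w i * A (p i) k)
      = lam * (if k = Fin.last n then -(n:ℝ) else 1) := by
    have hL0 : ∀ i : ι, w i • f (p i) = ∑ k, (w i * A (p i) k) • e k := by
      intro i
      rw [fexpand (p i), Finset.smul_sum]
      exact Finset.sum_congr rfl fun k _ => smul_smul (w i) _ (e k)
    have hL : ∑ i : ι, w i • f (p i)
        = ∑ k, (∑ i : ι, w i * A (p i) k) • e k := by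
      rw [Finset.sum_congr rfl fun i _ => hL0 i, Finset.sum_comm]
      exact Finset.sum_congr rfl fun k _ => (Finset.sum_smul).symm
    have hR : lam • ((∑ i : Fin n, e i.castSucc) - (n : ℝ) • e (Fin.last n))
        = ∑ k, (lam * (if k = Fin.last n then -(n:ℝ) else 1)) • e k := by
      rw [wexpand, Finset.smul_sum]
      exact Finset.sum_congr rfl fun k _ => (smul_smul lam _ (e k))
    have := hsum
    rw [hL, hR] at this
    exact hext _ _ this
  constructor
  · -- no outgoing edge at the last vertex
    intro j hj
    by_cases hreach : Relation.ReflTransGen (fun a b => (a, b) ∈ S) j (Fin.last n)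
    · -- build a cycle, so 0 ∈ C(S)
      obtain ⟨c, hc0, hcs⟩ := chain_aux e S hreach
      set c' : Fin (n + 1) × Fin (n + 1) → ℝ :=
        fun q => c q + if q = (Fin.last n, j) then 1 else 0 with hc'
      have hc'0 : ∀ q ∈ S, 0 ≤ c' q := by
        intro q _
        have : (0:ℝ) ≤ if q = (Fin.last n, j) then 1 else 0 := by split <;> norm_num
        exact add_nonneg (hc0 q) this
      have hind : ∑ q ∈ S, (if q = (Fin.last n, j) then (1:ℝ) else 0) • f q
          = e (Fin.last n) - e j := by
        rw [Finset.sum_congr rfl (fun q _ => by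
          split <;> simp : ∀ q ∈ S, (if q = (Fin.last n, j) then (1:ℝ) else 0) • f q
            = if q = (Fin.last n, j) then f q else 0)]
        rw [Finset.sum_ite_eq' S (Fin.last n, j) f, if_pos hj]
      have hsum0 : ∑ q ∈ S, c' q • f q = 0 := by
        calc ∑ q ∈ S, c' q • f q
            = (∑ q ∈ S, c q • f q)
              + ∑ q ∈ S, (if q = (Fin.last n, j) then (1:ℝ) else 0) • f q := by
              rw [← Finset.sum_add_distrib]
              exact Finset.sum_congr rfl fun q _ => by rw [hc', add_smul]
          _ = (e j - e (Fin.last n)) + (e (Fin.last n) - e j) := by rw [hcs, hind]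
          _ = 0 := by abel
      have hW : (0:ℝ) < ∑ q ∈ S, c' q := by
        have h1 : (1:ℝ) ≤ c' (Fin.last n, j) := by
          have : c' (Fin.last n, j) = c (Fin.last n, j) + 1 := by simp [hc']
          linarith [hc0 (Fin.last n, j)]
        have := Finset.single_le_sum hc'0 hj
        linarith
      have h0 : (0 : V) ∈ convexHull ℝ (f '' ↑S) := by
        have hmem0 := Finset.centerMass_mem_convexHull S hc'0 hW
          (z := f) (fun q hq => Set.mem_image_of_mem f hq)
        rwa [Finset.centerMass, hsum0, smul_zero] at hmem0
      exact h0hull h0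
    · -- reachability contradiction
      set R : Finset (Fin (n + 1)) :=
        Finset.univ.filter (fun k => Relation.ReflTransGen (fun a b => (a, b) ∈ S) j k)
        with hR
      have hjR : j ∈ R := by
        rw [hR, Finset.mem_filter]
        exact ⟨Finset.mem_univ j, Relation.ReflTransGen.refl⟩
      have hLR : Fin.last n ∉ R := by
        rw [hR, Finset.mem_filter]
        rintro ⟨-, h⟩
        exact hreach h
      have hclosed : ∀ q ∈ S, q.1 ∈ R → q.2 ∈ R := by
        intro q hq hq1
        rw [hR, Finset.mem_filter] at hq1 ⊢
        refine ⟨Finset.mem_univ _, hq1.2.tail ?_⟩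
        show (q.1, q.2) ∈ S
        simpa using hq
      -- T = sum of divergences over R
      have hT1 : ∑ k ∈ R, (∑ i : ι, w i * A (p i) k) = lam * R.card := by
        rw [Finset.sum_congr rfl (fun k hk => by
          rw [hdiv k, if_neg (by rintro rfl; exact hLR hk), mul_one] :
          ∀ k ∈ R, (∑ i : ι, w i * A (p i) k) = lam)]
        rw [Finset.sum_const, nsmul_eq_mul, mul_comm]
      have hT2 : ∑ k ∈ R, (∑ i : ι, w i * A (p i) k)
          = ∑ i : ι, w i * ((if (p i).1 ∈ R then (1:ℝ) else 0)
            - (if (p i).2 ∈ R then 1 else 0)) := by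
        rw [Finset.sum_comm]
        refine Finset.sum_congr rfl fun i _ => ?_
        rw [← Finset.mul_sum]
        congr 1
        rw [hA]
        simp only [Finset.sum_sub_distrib]
        congr 1
        · exact Finset.sum_ite_eq R (p i).1 (fun _ => (1:ℝ))
        · exact Finset.sum_ite_eq R (p i).2 (fun _ => (1:ℝ))
      have hT3 : ∑ i : ι, w i * ((if (p i).1 ∈ R then (1:ℝ) else 0)
          - (if (p i).2 ∈ R then 1 else 0)) ≤ 0 := by
        refine Finset.sum_nonpos fun i _ => ?_
        refine mul_nonpos_of_nonneg_of_nonpos (hw0 i) ?_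
        by_cases h1 : (p i).1 ∈ R
        · rw [if_pos h1, if_pos (hclosed (p i) (hpS i) h1)]
          norm_num
        · rw [if_neg h1]
          split <;> norm_num
      have hcard : (1:ℝ) ≤ R.card := by
        have : 0 < R.card := Finset.card_pos.mpr ⟨j, hjR⟩
        exact_mod_cast this
      nlinarith [hT1, hT2, hT3]
  · -- every other vertex has an outgoing edge
    intro i hiL
    by_contra hno
    push_neg at hno
    have hd := hdiv i
    rw [if_neg hiL, mul_one] at hd
    have hle : (∑ k : ι, w k * A (p k) i) ≤ 0 := by
      refine Finset.sum_nonpos fun k _ => ?_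
      refine mul_nonpos_of_nonneg_of_nonpos (hw0 k) ?_
      simp only [hA]
      have h1 : (p k).1 ≠ i := by
        intro h
        apply hno (p k).2
        have := hpS k
        rw [← h]
        simpa using this
      rw [if_neg h1]
      split <;> norm_num
    linarith
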